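/- Let N = 2^J, x ∈ ℝ^N, and 0 ≤ j ≤ J−1. Writing x^{(j+1)} for the reflected periodization at level j+1 and x^{(j)} for that at level j, the oddly indexed entries of the DCT-II of x^{(j+1)} satisfy ((x^{(j+1)})^II_{2k+1})_{k=0}^{2^j−1} = (1/√2) · C_{2^j}^IV (2 x^{(j+1)}_{(0)} − x^{(j)}). -/

import Mathlib

open Matrix

/-- The cosine matrix of type II of size `n`. -/
noncomputable def CII (n : ℕ) : Matrix (Fin n) (Fin n) ℝ :=
  Matrix.of fun k l : Fin n =>
    Real.sqrt (2 / (n : ℝ)) * (if (k : ℕ) % n = 0 then 1 / Real.sqrt 2 else 1) *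
      Real.cos ((k : ℕ) * (2 * (l : ℕ) + 1) * Real.pi / (2 * (n : ℝ)))

/-- The cosine matrix of type IV of size `n`. -/
noncomputable def CIV (n : ℕ) : Matrix (Fin n) (Fin n) ℝ :=
  Matrix.of fun k l : Fin n =>
    Real.sqrt (2 / (n : ℝ)) *
      Real.cos ((2 * (k : ℕ) + 1) * (2 * (l : ℕ) + 1) * Real.pi / (4 * (n : ℝ)))

/-- One step of reflected periodization: add the first half and the reflected second half. -/
noncomputable def halfSum (n : ℕ) (x : Fin (2 * n) → ℝ) : Fin n → ℝ :=
  fun k => x ⟨(k : ℕ), by have := k.isLt; omega⟩ +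
           x ⟨2 * n - 1 - (k : ℕ), by have := k.isLt; omega⟩

/-- Iterated reflected periodization, peeling off `s` halving steps. -/
noncomputable def perAux (j : ℕ) : (s : ℕ) → (Fin (2 ^ (j + s)) → ℝ) → Fin (2 ^ j) → ℝ
  | 0, x => x
  | s + 1, x => perAux j s (halfSum (2 ^ (j + s))
      (fun k => x (Fin.cast (by
        have h1 : j + (s + 1) = (j + s) + 1 := by omega
        rw [h1, pow_succ]; ring) k)))

/-- The reflected periodization `x^{(j)}` of `x ∈ ℝ^{2^J}`. -/
noncomputable def reflPer (J j : ℕ) (h : j ≤ J) (x : Fin (2 ^ J) → ℝ) : Fin (2 ^ j) → ℝ :=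
  perAux j (J - j) (fun k => x (Fin.cast (by rw [Nat.add_sub_cancel' h]) k))

lemma myPowLt (j : ℕ) (t : ℕ) (h : t < 2 ^ j) : t < 2 ^ (j+1) := by
  have : 2 ^ j ≤ 2 ^ (j+1) := Nat.pow_le_pow_right (by norm_num) (by omega)
  omega

lemma myPowLt2 (j : ℕ) (t : ℕ) : 2 ^ (j+1) - 1 - t < 2 ^ (j+1) := by
  have : 0 < 2 ^ (j+1) := Nat.pow_pos (show 0 < 2 by norm_num); omega

lemma halfSum_cast {a b : ℕ} (h : b = a) (x : Fin (2 * a) → ℝ) (m : Fin b) :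
    halfSum a x (Fin.cast h m) = halfSum b (fun t => x (Fin.cast (by rw [h]) t)) m := by
  subst h; rfl

lemma perAux_succ (j : ℕ) : ∀ (s : ℕ) (x : Fin (2 ^ (j + (s + 1))) → ℝ) (k : Fin (2 ^ j)),
    perAux j (s + 1) x k =
      perAux (j + 1) s (fun m => x (Fin.cast (by rw [show j + 1 + s = j + (s+1) by omega]) m))
          ⟨(k : ℕ), myPowLt j _ k.isLt⟩ +
      perAux (j + 1) s (fun m => x (Fin.cast (by rw [show j + 1 + s = j + (s+1) by omega]) m))
          ⟨2 ^ (j + 1) - 1 - (k : ℕ), myPowLt2 j _⟩ := by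
  intro s
  induction s with
  | zero =>
    intro x k
    simp only [perAux, halfSum]
    have hp : 2 * 2 ^ (j + 0) = 2 ^ (j + 1) := by rw [pow_succ]; ring
    congr 2 <;> apply Fin.ext <;> simp [Fin.coe_cast] <;> omega
  | succ s ih =>
    intro x k
    show perAux j (s + 1) (halfSum (2 ^ (j + (s+1))) _) k = _
    rw [ih]
    congr 2 <;>
    · funext m
      rw [halfSum_cast (by rw [show j + 1 + s = j + (s+1) by omega])]
      congr 1

lemma perAux_cast (j : ℕ) {s t : ℕ} (h : s = t) (x : Fin (2 ^ (j + s)) → ℝ) (k : Fin (2 ^ j)) :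
    perAux j s x k = perAux j t (fun m => x (Fin.cast (by rw [h]) m)) k := by
  subst h; rfl

lemma reflPer_succ (J j : ℕ) (h : j + 1 ≤ J) (x : Fin (2 ^ J) → ℝ) (k : Fin (2 ^ j)) :
    reflPer J j (le_trans (Nat.le_succ j) h) x k =
      reflPer J (j + 1) h x ⟨(k : ℕ), myPowLt j _ k.isLt⟩ +
      reflPer J (j + 1) h x ⟨2 ^ (j + 1) - 1 - (k : ℕ), myPowLt2 j _⟩ := by
  unfold reflPer
  rw [perAux_cast j (show J - j = (J - (j + 1)) + 1 by omega)]
  rw [perAux_succ]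
  congr 2


lemma cos_odd_sub (K : ℕ) (θ : ℝ) :
    Real.cos ((2 * (K : ℝ) + 1) * Real.pi - θ) = -Real.cos θ := by
  have h : (2 * (K : ℝ) + 1) * Real.pi - θ = (Real.pi - θ) + K * (2 * Real.pi) := by ring
  rw [h, Real.cos_add_nat_mul_two_pi, Real.cos_pi_sub]

lemma sum_split_reflect (n : ℕ) (f : ℕ → ℝ) :
    ∑ i ∈ Finset.range (n + n), f i = ∑ i ∈ Finset.range n, (f i + f (n + n - 1 - i)) := by
  rw [Finset.sum_range_add, ← Finset.sum_range_reflect (fun x => f (n + x)) n,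
    ← Finset.sum_add_distrib]
  refine Finset.sum_congr rfl fun i hi => ?_
  rw [Finset.mem_range] at hi
  congr 2
  omega

theorem odd_dctII_entries (J j : ℕ) (hJ : j + 1 ≤ J) (x : Fin (2 ^ J) → ℝ)
    (k : Fin (2 ^ j)) :
    (CII (2 ^ (j + 1))).mulVec (reflPer J (j + 1) hJ x)
        ⟨2 * (k : ℕ) + 1, by
          have hk := k.isLt
          have h2 : 2 ^ (j + 1) = 2 * 2 ^ j := by rw [pow_succ]; ring
          omega⟩ =
      (1 / Real.sqrt 2) *
        (CIV (2 ^ j)).mulVec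
          (fun l : Fin (2 ^ j) =>
            2 * reflPer J (j + 1) hJ x
                ⟨(l : ℕ), by
                  have hl := l.isLt
                  have h2 : 2 ^ (j + 1) = 2 * 2 ^ j := by rw [pow_succ]; ring
                  omega⟩ -
              reflPer J j (le_trans (Nat.le_succ j) hJ) x l) k := by
  have hpow : 2 ^ (j + 1) = 2 ^ j + 2 ^ j := by rw [pow_succ]; ring
  set y := reflPer J (j + 1) hJ x with hy
  set Y : ℕ → ℝ := fun t => if h : t < 2 ^ (j + 1) then y ⟨t, h⟩ else 0 with hYdef
  have hY : ∀ (t : ℕ) (h : t < 2 ^ (j + 1)), y ⟨t, h⟩ = Y t := by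
    intro t h; simp [hYdef, h]
  have hYall : ∀ i : Fin (2 ^ (j + 1)), y i = Y (i : ℕ) := by
    intro i; rw [← hY i i.isLt]
  have hmod : (2 * (k : ℕ) + 1) % 2 ^ (j + 1) = 2 * (k : ℕ) + 1 :=
    Nat.mod_eq_of_lt (by have := k.isLt; omega)
  have hite : ((2 * (k : ℕ) + 1) % 2 ^ (j + 1) = 0) = False := by
    simp [hmod]
  simp only [mulVec, dotProduct, CII, CIV, Matrix.of_apply, hite, if_false]
  simp only [reflPer_succ J j hJ x, ← hy, hYall, hY]
  set F : ℕ → ℝ := fun t =>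
    Real.sqrt (2 / ((2 ^ (j + 1) : ℕ) : ℝ)) * 1 *
      Real.cos (((2 * (k : ℕ) + 1 : ℕ) : ℝ) * (2 * (t : ℝ) + 1) * Real.pi /
        (2 * ((2 ^ (j + 1) : ℕ) : ℝ))) * Y t with hF
  set G : ℕ → ℝ := fun t =>
    Real.sqrt (2 / ((2 ^ j : ℕ) : ℝ)) *
      Real.cos ((2 * ((k : ℕ) : ℝ) + 1) * (2 * (t : ℝ) + 1) * Real.pi /
        (4 * ((2 ^ j : ℕ) : ℝ))) *
      (2 * Y t - (Y t + Y (2 ^ (j + 1) - 1 - t))) with hG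
  trans (∑ i : Fin (2 ^ (j + 1)), F (i : ℕ))
  · exact Finset.sum_congr rfl (fun i _ => rfl)
  trans ((1 / Real.sqrt 2) * ∑ l : Fin (2 ^ j), G (l : ℕ))
  swap
  · exact congrArg _ (Finset.sum_congr rfl (fun l _ => rfl))
  rw [Fin.sum_univ_eq_sum_range F, Fin.sum_univ_eq_sum_range G]
  rw [show Finset.range (2 ^ (j + 1)) = Finset.range (2 ^ j + 2 ^ j) from by rw [hpow]]
  rw [sum_split_reflect, Finset.mul_sum]
  refine Finset.sum_congr rfl fun t ht => ?_
  rw [Finset.mem_range] at ht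
  rw [show 2 ^ j + 2 ^ j - 1 - t = 2 ^ (j + 1) - 1 - t from by omega]
  simp only [hF, hG]
  have hle : 2 ^ j ≤ 2 ^ (j + 1) := Nat.pow_le_pow_right (by norm_num) (by omega)
  have h1 : (((2 * (k : ℕ) + 1 : ℕ)) : ℝ) * (2 * (t : ℝ) + 1) * Real.pi /
      (2 * ((2 ^ (j + 1) : ℕ) : ℝ)) =
      (2 * ((k : ℕ) : ℝ) + 1) * (2 * (t : ℝ) + 1) * Real.pi / (4 * ((2 ^ j : ℕ) : ℝ)) := by
    push_cast [pow_succ]; ring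
  have hc : (((2 ^ (j + 1) - 1 - t : ℕ)) : ℝ) = 2 ^ (j + 1) - 1 - (t : ℝ) := by
    rw [show 2 ^ (j + 1) - 1 - t = 2 ^ (j + 1) - (1 + t) from by omega,
      Nat.cast_sub (by omega)]
    push_cast; ring
  have h2 : (((2 * (k : ℕ) + 1 : ℕ)) : ℝ) * (2 * (((2 ^ (j + 1) - 1 - t : ℕ)) : ℝ) + 1) *
      Real.pi / (2 * ((2 ^ (j + 1) : ℕ) : ℝ)) =
      (2 * ((k : ℕ) : ℝ) + 1) * Real.pi -
        (2 * ((k : ℕ) : ℝ) + 1) * (2 * (t : ℝ) + 1) * Real.pi / (4 * ((2 ^ j : ℕ) : ℝ)) := by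
    rw [hc]
    have hne : ((2 : ℝ) ^ j) ≠ 0 := by positivity
    push_cast [pow_succ]
    field_simp
    ring
  rw [h1, h2, cos_odd_sub]
  have hs : Real.sqrt (2 / ((2 ^ (j + 1) : ℕ) : ℝ)) =
      1 / Real.sqrt 2 * Real.sqrt (2 / ((2 ^ j : ℕ) : ℝ)) := by
    rw [show (2 : ℝ) / ((2 ^ (j + 1) : ℕ) : ℝ) = (2 / ((2 ^ j : ℕ) : ℝ)) / 2 from by
      push_cast [pow_succ]; ring]
    rw [Real.sqrt_div (by positivity) 2]
    ring
  rw [hs]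
  ring
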